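/- arXiv:1409.4347 — 3 statements merged into one kernel-verified Lean document; each statement's English description precedes it below -/
import Mathlib

section
/- Let f, g : [a,b] → ℝ be functions positive on (a,b), with f affine and g convex, and suppose the one-sided limits lim_{t→a⁺} g(t)/f(t) and lim_{t→b⁻} g(t)/f(t) exist and are finite. Then for every t ∈ (a,b), g(t)/f(t) ≤ max{lim_{t→a⁺} g(t)/f(t), lim_{t→b⁻} g(t)/f(t)}. -/
open Set Filter Topology

theorem stmt_0 (a b : ℝ) (hab : a < b) (f g : ℝ → ℝ)
    (hf : ∀ l ∈ Icc (0:ℝ) 1, f (l * a + (1 - l) * b) = l * f a + (1 - l) * f b)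
    (hg : ConvexOn ℝ (Icc a b) g)
    (hfpos : ∀ t ∈ Ioo a b, 0 < f t) (hgpos : ∀ t ∈ Ioo a b, 0 < g t)
    (La Lb : ℝ)
    (hLa : Tendsto (fun t => g t / f t) (𝓝[>] a) (𝓝 La))
    (hLb : Tendsto (fun t => g t / f t) (𝓝[<] b) (𝓝 Lb)) :
    ∀ t ∈ Ioo a b, g t / f t ≤ max La Lb := by
  have hba : b - a ≠ 0 := sub_ne_zero.mpr hab.ne'
  -- explicit formula for f on [a,b]
  have fval : ∀ x ∈ Icc a b, f x = ((b-x)/(b-a)) * f a + ((x-a)/(b-a)) * f b := by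
    intro x hx
    have hl : (b-x)/(b-a) ∈ Icc (0:ℝ) 1 := by
      constructor
      · apply div_nonneg (by linarith [hx.2]) (by linarith)
      · rw [div_le_one (by linarith)]; linarith [hx.1]
    have h1 : ((b-x)/(b-a)) * a + (1 - (b-x)/(b-a)) * b = x := by
      field_simp
      ring
    have h2 : (1 : ℝ) - (b-x)/(b-a) = (x-a)/(b-a) := by
      field_simp
      ring
    have := hf _ hl
    rw [h1, h2] at this
    exact this
  -- key pointwise estimate
  have key : ∀ t ∈ Ioo a b, ∀ s ∈ Ioo a t, ∀ u ∈ Ioo t b,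
      g t / f t ≤ max (g s / f s) (g u / f u) := by
    intro t ht s hs u hu
    have hat : a < t := ht.1
    have htb : t < b := ht.2
    have has : a < s := hs.1
    have hst : s < t := hs.2
    have htu : t < u := hu.1
    have hub : u < b := hu.2
    have hus : (0:ℝ) < u - s := by linarith
    set l : ℝ := (u - t) / (u - s) with hl_def
    have hl0 : 0 ≤ l := div_nonneg (by linarith) hus.le
    have hl1 : 0 ≤ 1 - l := by
      have : l ≤ 1 := by rw [hl_def, div_le_one hus]; linarith
      linarith
    have hteq : l * s + (1 - l) * u = t := by
      rw [hl_def]; field_simp; ring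
    have hsmem : s ∈ Icc a b := ⟨has.le, by linarith⟩
    have humem : u ∈ Icc a b := ⟨by linarith, hub.le⟩
    have htmem : t ∈ Icc a b := ⟨hat.le, htb.le⟩
    -- convexity of g
    have hgle : g t ≤ l * g s + (1 - l) * g u := by
      have := hg.2 hsmem humem hl0 hl1 (by ring)
      simpa [smul_eq_mul, hteq] using this
    -- affineness of f
    have hfeq : f t = l * f s + (1 - l) * f u := by
      rw [fval t htmem, fval s hsmem, fval u humem, hl_def]
      field_simp
      ring
    have hfs : 0 < f s := hfpos s ⟨has, by linarith⟩
    have hfu : 0 < f u := hfpos u ⟨by linarith, hub⟩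
    have hft : 0 < f t := hfpos t ht
    set m : ℝ := max (g s / f s) (g u / f u) with hm_def
    have hgs : g s ≤ m * f s := by
      rw [← div_le_iff₀ hfs]; exact le_max_left _ _
    have hgu : g u ≤ m * f u := by
      rw [← div_le_iff₀ hfu]; exact le_max_right _ _
    have : g t ≤ m * f t := by
      calc g t ≤ l * g s + (1 - l) * g u := hgle
        _ ≤ l * (m * f s) + (1 - l) * (m * f u) := by
            apply add_le_add
            · exact mul_le_mul_of_nonneg_left hgs hl0
            · exact mul_le_mul_of_nonneg_left hgu hl1
        _ = m * f t := by rw [hfeq]; ring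
    rw [div_le_iff₀ hft]
    exact this
  intro t ht
  have hmax : Tendsto (fun p : ℝ × ℝ => max (g p.1 / f p.1) (g p.2 / f p.2))
      ((𝓝[>] a) ×ˢ (𝓝[<] b)) (𝓝 (max La Lb)) :=
    (hLa.comp tendsto_fst).max (hLb.comp tendsto_snd)
  refine ge_of_tendsto hmax ?_
  filter_upwards [prod_mem_prod (Ioo_mem_nhdsGT_of_mem ⟨le_refl a, ht.1⟩)
      (Ioo_mem_nhdsLT_of_mem ⟨ht.2, le_refl b⟩)] with p hp
  exact key t ht p.1 hp.1 p.2 hp.2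
end

section
/- Let f, g : [a,b] → ℝ be functions positive on (a,b), with f affine and g convex, and suppose the one-sided limits L_a = lim_{t→a⁺} g(t)/f(t) and L_b = lim_{t→b⁻} g(t)/f(t) exist and are finite. If f(a) = 0, then for every t ∈ (a,b), g(t)/f(t) ≤ L_b. -/
open Set Filter Topology

theorem stmt_1 (a b : ℝ) (hab : a < b) (f g : ℝ → ℝ)
    (hf : ∀ l ∈ Icc (0:ℝ) 1, f (l * a + (1 - l) * b) = l * f a + (1 - l) * f b)
    (hg : ConvexOn ℝ (Icc a b) g)
    (hfpos : ∀ t ∈ Ioo a b, 0 < f t) (hgpos : ∀ t ∈ Ioo a b, 0 < g t)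
    (La Lb : ℝ)
    (hLa : Tendsto (fun t => g t / f t) (𝓝[>] a) (𝓝 La))
    (hLb : Tendsto (fun t => g t / f t) (𝓝[<] b) (𝓝 Lb))
    (hfa : f a = 0) :
    ∀ t ∈ Ioo a b, g t / f t ≤ Lb := by
  have hba : (0:ℝ) < b - a := by linarith
  -- affine formula for f
  have hfeq : ∀ x ∈ Icc a b, f x = (x - a) / (b - a) * f b := by
    intro x hx
    obtain ⟨hax, hxb⟩ := hx
    have hl : (b - x)/(b - a) ∈ Icc (0:ℝ) 1 := by
      constructor
      · apply div_nonneg <;> linarith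
      · rw [div_le_one hba]; linarith
    have harg : (b - x)/(b-a) * a + (1 - (b-x)/(b-a)) * b = x := by
      field_simp
      ring
    have := hf _ hl
    rw [harg, hfa] at this
    rw [this]
    field_simp
    ring
  have hfb : 0 < f b := by
    have hm : (a+b)/2 ∈ Ioo a b := ⟨by linarith, by linarith⟩
    have h1 := hfpos _ hm
    rw [hfeq _ (Ioo_subset_Icc_self hm)] at h1
    have h2 : ((a + b) / 2 - a) / (b - a) = 1/2 := by field_simp; ring
    rw [h2] at h1
    linarith
  -- f tends to 0 at a⁺
  have hfto : Tendsto f (𝓝[>] a) (𝓝 0) := by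
    have h1 : Tendsto (fun x : ℝ => (x - a)/(b - a) * f b) (𝓝[>] a) (𝓝 0) := by
      have : Tendsto (fun x : ℝ => (x - a)/(b - a) * f b) (𝓝 a) (𝓝 ((a - a)/(b-a) * f b)) := by
        apply Tendsto.mul_const
        apply Tendsto.div_const
        exact (continuous_id.sub continuous_const).tendsto a
      simpa using this.mono_left nhdsWithin_le_nhds
    apply h1.congr'
    filter_upwards [Ioo_mem_nhdsGT_of_mem ⟨le_refl a, hab⟩] with r hr
    exact (hfeq r (Ioo_subset_Icc_self hr)).symm
  -- g tends to 0 at a⁺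
  have hg0 : Tendsto g (𝓝[>] a) (𝓝 0) := by
    have h1 : Tendsto (fun r => (g r / f r) * f r) (𝓝[>] a) (𝓝 (La * 0)) :=
      hLa.mul hfto
    rw [mul_zero] at h1
    apply h1.congr'
    filter_upwards [Ioo_mem_nhdsGT_of_mem ⟨le_refl a, hab⟩] with r hr
    have := hfpos r hr
    field_simp
  intro t ht
  obtain ⟨hta, htb⟩ := ht
  -- key inequality for s ∈ (t, b)
  have key : ∀ s ∈ Ioo t b, g t ≤ (t - a)/(s - a) * g s := by
    intro s hs
    obtain ⟨hst, hsb⟩ := hs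
    have hsa : a < s := lt_trans hta hst
    have hev : ∀ᶠ r in 𝓝[>] a,
        g t ≤ (s - t)/(s - r) * g r + (t - r)/(s - r) * g s := by
      filter_upwards [Ioo_mem_nhdsGT_of_mem ⟨le_refl a, hta⟩] with r hr
      obtain ⟨hra, hrt⟩ := hr
      have hrs : r < s := lt_trans hrt hst
      have hlam : (s - t)/(s - r) * r + (t - r)/(s - r) * s = t := by
        have : s - r ≠ 0 := by linarith
        field_simp
        ring
      have hsr : (0:ℝ) < s - r := by linarith
      have hmu : (0:ℝ) ≤ (s - t)/(s - r) := div_nonneg (by linarith) (by linarith)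
      have hnu : (0:ℝ) ≤ (t - r)/(s - r) := div_nonneg (by linarith) (by linarith)
      have hsum : (s - t)/(s - r) + (t - r)/(s - r) = 1 := by
        field_simp
        ring
      have hcx := hg.2 (mem_Icc.mpr ⟨le_of_lt hra, by linarith⟩)
        (mem_Icc.mpr ⟨le_of_lt hsa, le_of_lt hsb⟩) hmu hnu hsum
      simpa [smul_eq_mul, hlam] using hcx
    have hrhs : Tendsto (fun r => (s - t)/(s - r) * g r + (t - r)/(s - r) * g s)
        (𝓝[>] a) (𝓝 ((s - t)/(s - a) * 0 + (t - a)/(s - a) * g s)) := by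
      have hsub : Tendsto (fun r : ℝ => s - r) (𝓝[>] a) (𝓝 (s - a)) :=
        ((continuous_const.sub continuous_id).tendsto a).mono_left nhdsWithin_le_nhds
      have htr : Tendsto (fun r : ℝ => t - r) (𝓝[>] a) (𝓝 (t - a)) :=
        ((continuous_const.sub continuous_id).tendsto a).mono_left nhdsWithin_le_nhds
      have hne : s - a ≠ 0 := by linarith
      exact ((tendsto_const_nhds.div hsub hne).mul hg0).add
        (((htr.div hsub hne).mul_const (g s)))
    have := ge_of_tendsto hrhs hev
    simpa using this
  -- take s → b⁻
  have hlim : Tendsto (fun s => (t - a)/(s - a) * g s) (𝓝[<] b)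
      (𝓝 ((t - a) * (f b / (b - a)) * Lb)) := by
    have h1 : Tendsto (fun s => (t - a) * (f b / (b - a)) * (g s / f s)) (𝓝[<] b)
        (𝓝 ((t - a) * (f b / (b - a)) * Lb)) := hLb.const_mul _
    apply h1.congr'
    filter_upwards [Ioo_mem_nhdsLT_of_mem ⟨hab, le_refl b⟩] with s hs
    obtain ⟨hsa, hsb⟩ := hs
    have hfs := hfeq s (Ioo_subset_Icc_self ⟨hsa, hsb⟩)
    have hfspos := hfpos s ⟨hsa, hsb⟩
    rw [hfs]
    have h2 : s - a ≠ 0 := by linarith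
    field_simp
  have hgt : g t ≤ (t - a) * (f b / (b - a)) * Lb := by
    apply ge_of_tendsto hlim
    filter_upwards [Ioo_mem_nhdsLT_of_mem ⟨htb, le_refl b⟩] with s hs
    exact key s ⟨hs.1, hs.2⟩
  have hft : 0 < f t := hfpos t ⟨hta, htb⟩
  have hfteq := hfeq t (Ioo_subset_Icc_self ⟨hta, htb⟩)
  rw [div_le_iff₀ hft]
  rw [hfteq]
  have : (t - a) * (f b / (b - a)) * Lb = Lb * ((t - a) / (b - a) * f b) := by
    field_simp
  linarith [hgt, this.symm.le]
end

section
/- Let f : [-a,a] → ℝ be a nonnegative even concave function, a > 0, and let 0 < p < q. Then ((1+p)/(2a) · ∫_{-a}^{a} f(s)^p ds)^{1/p} ≥ ((1+q)/(2a) · ∫_{-a}^{a} f(s)^q ds)^{1/q}. -/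
open Set intervalIntegral MeasureTheory

/-- Tangent line inequality for `rpow`: for `1 ≤ r` and nonnegative `u, w`,
`w ^ r + r * w ^ (r - 1) * (u - w) ≤ u ^ r`. -/
lemma berwald_tangent {r u w : ℝ} (hr : 1 < r) (hu : 0 ≤ u) (hw : 0 ≤ w) :
    w ^ r + r * w ^ (r - 1) * (u - w) ≤ u ^ r := by
  rcases eq_or_lt_of_le hw with h0 | h0
  · rw [← h0]
    rw [Real.zero_rpow (by positivity), Real.zero_rpow (by nlinarith)]
    simpa using Real.rpow_nonneg hu r
  · have hz : (-1 : ℝ) ≤ u / w - 1 := by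
      have : (0:ℝ) ≤ u / w := div_nonneg hu h0.le
      linarith
    have key := one_add_mul_self_le_rpow_one_add hz hr.le
    have h1z : (1 : ℝ) + (u / w - 1) = u / w := by ring
    rw [h1z] at key
    have hwr : (0:ℝ) < w ^ r := Real.rpow_pos_of_pos h0 r
    have hmul := mul_le_mul_of_nonneg_left key hwr.le
    have hdiv : (u / w) ^ r = u ^ r / w ^ r := Real.div_rpow hu h0.le r
    have hsub : w ^ (r - 1) = w ^ r / w := by
      rw [Real.rpow_sub h0, Real.rpow_one]
    rw [hdiv] at hmul
    have hwne : w ≠ 0 := h0.ne'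
    have hwrne : w ^ r ≠ 0 := hwr.ne'
    calc w ^ r + r * w ^ (r - 1) * (u - w)
        = w ^ r * (1 + r * (u / w - 1)) := by
          rw [hsub]; field_simp
      _ ≤ w ^ r * (u ^ r / w ^ r) := hmul
      _ = u ^ r := by field_simp

/-- Pointwise comparison lemma: if `k ≤ v ≤ u` or `u ≤ v ≤ k` (all nonnegative),
then `r * k ^ (r-1) * (u - v) ≤ u ^ r - v ^ r`. -/
lemma berwald_pointwise {r k u v : ℝ} (hr : 1 < r) (hu : 0 ≤ u) (hv : 0 ≤ v) (hk : 0 ≤ k)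
    (hcase : (k ≤ v ∧ v ≤ u) ∨ (u ≤ v ∧ v ≤ k)) :
    r * k ^ (r - 1) * (u - v) ≤ u ^ r - v ^ r := by
  have tang := berwald_tangent hr hu hv
  have hstep : r * k ^ (r - 1) * (u - v) ≤ r * v ^ (r - 1) * (u - v) := by
    rcases hcase with ⟨hkv, hvu⟩ | ⟨huv, hvk⟩
    · have h1 : k ^ (r - 1) ≤ v ^ (r - 1) := Real.rpow_le_rpow hk hkv (by linarith)
      have h2 : 0 ≤ u - v := by linarith
      have h3 := mul_le_mul_of_nonneg_right h1 h2
      nlinarith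
    · have h1 : v ^ (r - 1) ≤ k ^ (r - 1) := Real.rpow_le_rpow hv hvk (by linarith)
      have h2 : u - v ≤ 0 := by linarith
      have h3 := mul_le_mul_of_nonpos_right h1 h2
      nlinarith
  linarith

set_option maxHeartbeats 2000000 in
theorem stmt_4 (a : ℝ) (ha : 0 < a) (f : ℝ → ℝ)
    (hf0 : ∀ s ∈ Icc (-a) a, 0 ≤ f s)
    (hfe : ∀ s, f (-s) = f s)
    (hfc : ConcaveOn ℝ (Icc (-a) a) f)
    (p q : ℝ) (hp : 0 < p) (hpq : p < q) :
    ((1 + p) / (2 * a) * ∫ s in (-a)..a, f s ^ p) ^ (1 / p) ≥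
      ((1 + q) / (2 * a) * ∫ s in (-a)..a, f s ^ q) ^ (1 / q) := by
  have hq : 0 < q := hp.trans hpq
  -- membership helpers
  have hmem : ∀ s ∈ Icc (0:ℝ) a, s ∈ Icc (-a) a := by
    intro s hs; exact ⟨by linarith [hs.1], hs.2⟩
  have hmem' : ∀ s ∈ Icc (0:ℝ) a, -s ∈ Icc (-a) a := by
    intro s hs; constructor <;> [linarith [hs.2]; linarith [hs.1]]
  -- f is antitone on [0, a]
  have hanti : ∀ x ∈ Icc (0:ℝ) a, ∀ y ∈ Icc (0:ℝ) a, x ≤ y → f y ≤ f x := by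
    intro x hx y hy hxy
    rcases eq_or_lt_of_le hy.1 with hy0 | hy0
    · have hx0 : x = 0 := le_antisymm (hxy.trans hy0.symm.le) hx.1
      rw [hx0, ← hy0]
    · set t : ℝ := (y - x) / (2 * y) with ht_def
      have ht0 : 0 ≤ t := div_nonneg (by linarith) (by linarith)
      have ht1 : 0 ≤ 1 - t := by
        have : t ≤ 1 := by
          rw [ht_def, div_le_one (by linarith)]
          linarith [hx.1]
        linarith
      have hsum : t + (1 - t) = 1 := by ring
      have hconc := hfc.2 (hmem' y hy) (hmem y hy) ht0 ht1 hsum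
      have harg : t • (-y) + (1 - t) • y = x := by
        simp only [smul_eq_mul, ht_def]
        field_simp
        ring
      rw [harg] at hconc
      simp only [smul_eq_mul, hfe y] at hconc
      nlinarith [hconc]
  have hfnn : ∀ s ∈ Icc (0:ℝ) a, 0 ≤ f s := fun s hs => hf0 s (hmem s hs)
  -- interval integrability of f ^ r on [0, a] and [-a, 0]
  have hfin : ∀ r : ℝ, 0 < r → IntervalIntegrable (fun s => f s ^ r) volume 0 a := by
    intro r hr
    apply AntitoneOn.intervalIntegrable
    rw [uIcc_of_le ha.le]
    intro x hx y hy hxy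
    exact Real.rpow_le_rpow (hfnn y hy) (hanti x hx y hy hxy) hr.le
  have hfin' : ∀ r : ℝ, 0 < r → IntervalIntegrable (fun s => f s ^ r) volume (-a) 0 := by
    intro r hr
    apply MonotoneOn.intervalIntegrable
    rw [uIcc_of_le (by linarith : -a ≤ (0:ℝ))]
    intro x hx y hy hxy
    have hx' : -x ∈ Icc (0:ℝ) a := ⟨by linarith [hx.2], by linarith [hx.1]⟩
    have hy' : -y ∈ Icc (0:ℝ) a := ⟨by linarith [hy.2], by linarith [hy.1]⟩
    have := hanti (-y) hy' (-x) hx' (by linarith)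
    rw [hfe, hfe] at this
    exact Real.rpow_le_rpow (by rw [← hfe]; exact hfnn (-x) hx') this hr.le
  -- symmetry reduction
  have hsym : ∀ r : ℝ, 0 < r →
      (∫ s in (-a)..a, f s ^ r) = 2 * ∫ s in (0:ℝ)..a, f s ^ r := by
    intro r hr
    have h1 : (∫ s in (-a)..(0:ℝ), f s ^ r) = ∫ s in (0:ℝ)..a, f s ^ r := by
      have := intervalIntegral.integral_comp_neg (a := (0:ℝ)) (b := a)
        (fun s => f s ^ r)
      simp only [hfe, neg_zero] at this
      exact this.symm
    rw [← intervalIntegral.integral_add_adjacent_intervals (hfin' r hr) (hfin r hr), h1]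
    ring
  -- nonnegativity of the integrals
  have hInn : ∀ r : ℝ, 0 ≤ ∫ s in (0:ℝ)..a, f s ^ r := by
    intro r
    apply intervalIntegral.integral_nonneg ha.le
    intro s hs
    exact Real.rpow_nonneg (hfnn s hs) r
  set A := ∫ s in (0:ℝ)..a, f s ^ p with hA_def
  set B := ∫ s in (0:ℝ)..a, f s ^ q with hB_def
  have hA0 : 0 ≤ A := hInn p
  have hB0 : 0 ≤ B := hInn q
  clear_value A B
  set c : ℝ := ((1 + p) / a * A) ^ (1 / p) with hc_def
  have hbase : 0 ≤ (1 + p) / a * A :=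
    mul_nonneg (div_nonneg (by linarith) ha.le) hA0
  have hc0 : 0 ≤ c := Real.rpow_nonneg hbase _
  have hcp : c ^ p = (1 + p) / a * A := by
    rw [hc_def, ← Real.rpow_mul hbase, one_div_mul_cancel hp.ne', Real.rpow_one]
  clear_value c
  -- the comparison linear function
  set h : ℝ → ℝ := fun s => c * (1 - s / a) with hh_def
  have hhnn : ∀ s ∈ Icc (0:ℝ) a, 0 ≤ h s := by
    intro s hs
    have h1 : s / a ≤ 1 := (div_le_one ha).mpr hs.2
    exact mul_nonneg hc0 (by linarith)
  have hhc : Continuous h :=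
    continuous_const.mul (continuous_const.sub (continuous_id.div_const a))
  clear_value h
  have hhint : ∀ r : ℝ, 0 < r → IntervalIntegrable (fun s => h s ^ r) volume 0 a := by
    intro r hr
    apply ContinuousOn.intervalIntegrable
    apply ContinuousOn.rpow_const hhc.continuousOn
    intro x _
    exact Or.inr hr.le
  -- explicit computation of ∫ h ^ r
  have hhcomp : ∀ r : ℝ, 0 < r →
      (∫ s in (0:ℝ)..a, h s ^ r) = c ^ r * a / (r + 1) := by
    intro r hr
    have hcongr : EqOn (fun s => h s ^ r) (fun s => (c / a) ^ r * (a - s) ^ r)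
        (uIcc (0:ℝ) a) := by
      intro s hs
      rw [uIcc_of_le ha.le] at hs
      have h1 : h s = c / a * (a - s) := by rw [hh_def]; field_simp
      simp only
      rw [h1, Real.mul_rpow (div_nonneg hc0 ha.le) (by linarith [hs.2])]
    rw [intervalIntegral.integral_congr hcongr]
    rw [intervalIntegral.integral_const_mul]
    have h2 : (∫ s in (0:ℝ)..a, (a - s) ^ r) = ∫ x in (0:ℝ)..a, x ^ r := by
      have := intervalIntegral.integral_comp_sub_left (a := (0:ℝ)) (b := a)
        (fun x => x ^ r) a
      simpa using this
    rw [h2, integral_rpow (Or.inl (by linarith : (-1:ℝ) < r))]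
    rw [Real.zero_rpow (by positivity), Real.div_rpow hc0 ha.le,
      Real.rpow_add ha, Real.rpow_one]
    have har : (0:ℝ) < a ^ r := Real.rpow_pos_of_pos ha r
    field_simp
    ring
  have hhpA : (∫ s in (0:ℝ)..a, h s ^ p) = A := by
    rw [hhcomp p hp, hcp]
    field_simp [ha.ne', (show p + 1 ≠ 0 by positivity)]
    ring
  -- KEY STEP : B ≤ c ^ q * a / (q + 1)
  have hkey : B ≤ c ^ q * a / (q + 1) := by
    set S : Set ℝ := {s | s ∈ Icc (0:ℝ) a ∧ h s ≤ f s} with hS_def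
    have haS : a ∈ S := by
      refine ⟨⟨ha.le, le_refl a⟩, ?_⟩
      have : h a = 0 := by rw [hh_def]; field_simp; simp
      rw [this]
      exact hf0 a ⟨by linarith, le_refl a⟩
    have hSne : S.Nonempty := ⟨a, haS⟩
    have hSbdd : BddBelow S := ⟨0, fun s hs => hs.1.1⟩
    set α := sInf S with hα_def
    have hα0 : 0 ≤ α := le_csInf hSne fun s hs => hs.1.1
    have hαa : α ≤ a := csInf_le hSbdd haS
    -- above α, h ≤ f
    have hS : ∀ t, α < t → t ≤ a → h t ≤ f t := by
      intro t hαt hta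
      obtain ⟨s₀, hs₀S, hs₀lt⟩ := exists_lt_of_csInf_lt hSne hαt
      rcases eq_or_lt_of_le hta with rfl | hta'
      · exact haS.2
      · have hs₀a : s₀ < a := lt_of_lt_of_le (hs₀lt.trans hta') (le_refl a)
        set θ : ℝ := (a - t) / (a - s₀) with hθ_def
        have hθ0 : 0 ≤ θ := div_nonneg (by linarith) (by linarith)
        have hθ1 : 0 ≤ 1 - θ := by
          have : θ ≤ 1 := by
            rw [hθ_def, div_le_one (by linarith)]
            linarith
          linarith
        have hsum : θ + (1 - θ) = 1 := by ring
        have hconc := hfc.2 (hmem s₀ hs₀S.1) (hmem a ⟨ha.le, le_refl a⟩) hθ0 hθ1 hsum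
        have hne : a - s₀ ≠ 0 := sub_ne_zero.mpr hs₀a.ne'
        have hmul : θ * (a - s₀) = a - t := by
          rw [hθ_def]; exact div_mul_cancel₀ _ hne
        have harg : θ • s₀ + (1 - θ) • a = t := by
          simp only [smul_eq_mul]
          nlinarith [hmul]
        rw [harg] at hconc
        simp only [smul_eq_mul] at hconc
        have hha : h a = 0 := by rw [hh_def]; field_simp; simp
        have hht : h t = θ * h s₀ := by
          have e1 : h t = c * (a - t) / a := by
            rw [hh_def]; field_simp [ha.ne']; try ring
          have e2 : θ * h s₀ = c * (θ * (a - s₀)) / a := by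
            rw [hh_def]; field_simp [ha.ne']; try ring
          simp only [e1, e2, hmul]
        have hfa : 0 ≤ f a := hf0 a ⟨by linarith, le_refl a⟩
        have h1 : θ * h s₀ ≤ θ * f s₀ := mul_le_mul_of_nonneg_left hs₀S.2 hθ0
        nlinarith
    -- below α, f < h
    have hlt : ∀ s, 0 ≤ s → s < α → f s < h s := by
      intro s hs0 hsα
      by_contra hcon
      push_neg at hcon
      have : s ∈ S := ⟨⟨hs0, hsα.le.trans hαa⟩, hcon⟩
      exact absurd (csInf_le hSbdd this) (not_le.mpr hsα)
    clear_value S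
    clear_value α
    set κ : ℝ := c * (1 - α / a) with hκ_def
    clear_value κ
    have hκ0 : 0 ≤ κ := by
      rw [hκ_def]
      have h1 : α / a ≤ 1 := (div_le_one ha).mpr hαa
      exact mul_nonneg hc0 (by linarith)
    -- below α, κ ≤ f s
    have hfsk : ∀ s, 0 ≤ s → s < α → κ ≤ f s := by
      intro s hs0 hsα
      rcases eq_or_lt_of_le hαa with heq | hαa'
      · have : κ = 0 := by rw [hκ_def, heq]; field_simp; simp
        rw [this]
        exact hfnn s ⟨hs0, by linarith⟩
      · apply le_of_forall_pos_le_add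
        intro ε hε
        set t : ℝ := min a (α + a * ε / (c + 1)) with ht_def
        have htα : α < t := by
          apply lt_min hαa'
          have : 0 < a * ε / (c + 1) := div_pos (mul_pos ha hε) (by linarith)
          linarith
        have hta : t ≤ a := min_le_left _ _
        have ht0 : 0 ≤ t := le_of_lt (lt_of_le_of_lt hα0 htα)
        have h1 : f t ≤ f s := hanti s ⟨hs0, by linarith⟩ t ⟨ht0, hta⟩ (by linarith)
        have h2 : h t ≤ f t := hS t htα hta
        have h3 : κ ≤ h t + ε := by
          have htle : t ≤ α + a * ε / (c + 1) := min_le_right _ _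
          have hht : h t = κ - c * (t - α) / a := by
            simp only [hh_def, hκ_def]
            field_simp [ha.ne']
            ring
          rw [hht]
          have hcb : c * (t - α) / a ≤ ε := by
            have h4 : c * (t - α) ≤ c * (a * ε / (c + 1)) :=
              mul_le_mul_of_nonneg_left (by linarith) hc0
            have h5 : c * (a * ε / (c + 1)) / a = c * ε / (c + 1) := by
              field_simp [ha.ne', (show c + 1 ≠ 0 by linarith)]
            have h6 : c * ε / (c + 1) ≤ ε := by
              rw [div_le_iff₀ (by linarith)]
              nlinarith
            calc c * (t - α) / a ≤ c * (a * ε / (c + 1)) / a :=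
                  (div_le_div_iff_of_pos_right ha).mpr h4
              _ = c * ε / (c + 1) := h5
              _ ≤ ε := h6
          linarith
        linarith
    -- above α (when 0 < α), f s ≤ κ
    have hfks : 0 < α → ∀ s, α < s → s ≤ a → f s ≤ κ := by
      intro hα0' s hαs hsa
      apply le_of_forall_pos_le_add
      intro ε hε
      set t : ℝ := max 0 (α - a * ε / (c + 1)) with ht_def
      have htα : t < α := by
        apply max_lt hα0'
        have : 0 < a * ε / (c + 1) := div_pos (mul_pos ha hε) (by linarith)
        linarith
      have ht0 : 0 ≤ t := le_max_left _ _
      have h1 : f s ≤ f t :=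
        hanti t ⟨ht0, by linarith⟩ s ⟨by linarith, hsa⟩ (by linarith)
      have h2 : f t < h t := hlt t ht0 htα
      have h3 : h t ≤ κ + ε := by
        have htge : α - a * ε / (c + 1) ≤ t := le_max_right _ _
        have hht : h t = κ + c * (α - t) / a := by
          simp only [hh_def, hκ_def]
          field_simp [ha.ne']
          ring
        rw [hht]
        have hcb : c * (α - t) / a ≤ ε := by
          have h4 : c * (α - t) ≤ c * (a * ε / (c + 1)) :=
            mul_le_mul_of_nonneg_left (by linarith) hc0
          have h5 : c * (a * ε / (c + 1)) / a = c * ε / (c + 1) := by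
            field_simp [ha.ne', (show c + 1 ≠ 0 by linarith)]
          have h6 : c * ε / (c + 1) ≤ ε := by
            rw [div_le_iff₀ (by linarith)]
            nlinarith
          calc c * (α - t) / a ≤ c * (a * ε / (c + 1)) / a :=
                (div_le_div_iff_of_pos_right ha).mpr h4
            _ = c * ε / (c + 1) := h5
            _ ≤ ε := h6
        linarith
      linarith
    -- a.e. facts
    have hαne : ∀ᵐ s : ℝ, s ≠ α := by
      rw [MeasureTheory.ae_iff]
      have : {x : ℝ | ¬x ≠ α} = {α} := by ext x; simp
      rw [this]
      exact Real.volume_singleton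
    have hhq : (∫ s in (0:ℝ)..a, h s ^ q) = c ^ q * a / (q + 1) := hhcomp q hq
    rcases eq_or_lt_of_le hα0 with hα0' | hα0'
    · -- degenerate case α = 0 : f = h a.e. on (0, a)
      have hfh : ∀ s ∈ Ioc (0:ℝ) a, h s ≤ f s := fun s hs =>
        hS s (hα0' ▸ hs.1) hs.2
      have hzero : (∫ s in (0:ℝ)..a, (f s ^ p - h s ^ p)) = 0 := by
        rw [intervalIntegral.integral_sub (hfin p hp) (hhint p hp), hhpA]
        simp [hA_def]
      have hae : (fun s => f s ^ p - h s ^ p) =ᵐ[volume.restrict (Ioc 0 a)] 0 := by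
        have hnn : 0 ≤ᵐ[volume.restrict (Ioc (0:ℝ) a)] fun s => f s ^ p - h s ^ p := by
          filter_upwards [ae_restrict_mem measurableSet_Ioc] with s hs
          have h1 : h s ^ p ≤ f s ^ p :=
            Real.rpow_le_rpow (hhnn s ⟨hs.1.le, hs.2⟩) (hfh s hs) hp.le
          simp only [Pi.zero_apply]
          linarith
        exact (intervalIntegral.integral_eq_zero_iff_of_le_of_nonneg_ae ha.le hnn
          ((hfin p hp).sub (hhint p hp))).mp hzero
      have hBq : B = ∫ s in (0:ℝ)..a, h s ^ q := by
        rw [hB_def]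
        refine intervalIntegral.integral_congr_ae' ?_ ?_
        swap
        · refine Filter.Eventually.of_forall fun x hx => absurd hx ?_
          rw [Set.mem_Ioc]
          push_neg
          intro hax
          linarith
        have := (ae_restrict_iff' measurableSet_Ioc).mp hae
        filter_upwards [this] with s hs hsmem
        have heq : f s ^ p = h s ^ p := by
          have := hs hsmem
          simp only [Pi.zero_apply] at this
          linarith
        have hfs : 0 ≤ f s := hfnn s ⟨hsmem.1.le, hsmem.2⟩
        have hhs : 0 ≤ h s := hhnn s ⟨hsmem.1.le, hsmem.2⟩
        have hfq : f s ^ q = (f s ^ p) ^ (q / p) := by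
          rw [← Real.rpow_mul hfs]
          congr 1
          field_simp [hp.ne']
        have hhq' : h s ^ q = (h s ^ p) ^ (q / p) := by
          rw [← Real.rpow_mul hhs]
          congr 1
          field_simp [hp.ne']
        rw [hfq, hhq', heq]
      rw [← hhq, hBq]
    · -- main case 0 < α
      set r : ℝ := q / p with hr_def
      have hr1 : 1 < r := (one_lt_div hp).mpr hpq
      set C : ℝ := r * (κ ^ p) ^ (r - 1) with hC_def
      have hclaim : ∀ s ∈ Ioo (0:ℝ) a, s ≠ α →
          C * (h s ^ p - f s ^ p) ≤ h s ^ q - f s ^ q := by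
        intro s hs hsα
        have hfs : 0 ≤ f s := hfnn s ⟨hs.1.le, hs.2.le⟩
        have hhs : 0 ≤ h s := hhnn s ⟨hs.1.le, hs.2.le⟩
        have hcase : (κ ^ p ≤ f s ^ p ∧ f s ^ p ≤ h s ^ p) ∨
            (h s ^ p ≤ f s ^ p ∧ f s ^ p ≤ κ ^ p) := by
          rcases lt_or_gt_of_ne hsα with hslt | hsgt
          · left
            exact ⟨Real.rpow_le_rpow hκ0 (hfsk s hs.1.le hslt) hp.le,
              Real.rpow_le_rpow hfs (hlt s hs.1.le hslt).le hp.le⟩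
          · right
            exact ⟨Real.rpow_le_rpow hhs (hS s hsgt hs.2.le) hp.le,
              Real.rpow_le_rpow hfs (hfks hα0' s hsgt hs.2.le) hp.le⟩
        have hpw := berwald_pointwise hr1 (Real.rpow_nonneg hhs p)
          (Real.rpow_nonneg hfs p) (Real.rpow_nonneg hκ0 p) hcase
        have hu : (h s ^ p) ^ r = h s ^ q := by
          rw [← Real.rpow_mul hhs]
          congr 1
          rw [hr_def]; field_simp [hp.ne']
        have hv : (f s ^ p) ^ r = f s ^ q := by
          rw [← Real.rpow_mul hfs]
          congr 1
          rw [hr_def]; field_simp [hp.ne']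
        rw [hu, hv] at hpw
        calc C * (h s ^ p - f s ^ p) = r * (κ ^ p) ^ (r - 1) * (h s ^ p - f s ^ p) := by
              rw [hC_def]
          _ ≤ h s ^ q - f s ^ q := hpw
      -- integrate the pointwise inequality
      have hintD : IntervalIntegrable
          (fun s => h s ^ q - f s ^ q - C * (h s ^ p - f s ^ p)) volume 0 a := by
        exact ((hhint q hq).sub (hfin q hq)).sub
          (((hhint p hp).sub (hfin p hp)).const_mul C)
      have hnnD : 0 ≤ ∫ s in (0:ℝ)..a,
          (h s ^ q - f s ^ q - C * (h s ^ p - f s ^ p)) := by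
        apply intervalIntegral.integral_nonneg_of_ae_restrict ha.le
        filter_upwards [ae_restrict_mem measurableSet_Icc, ae_restrict_of_ae hαne,
          ae_restrict_of_ae (show ∀ᵐ s : ℝ, s ≠ 0 by
            rw [MeasureTheory.ae_iff]
            have : {x : ℝ | ¬x ≠ 0} = {0} := by ext x; simp
            rw [this]; exact Real.volume_singleton),
          ae_restrict_of_ae (show ∀ᵐ s : ℝ, s ≠ a by
            rw [MeasureTheory.ae_iff]
            have : {x : ℝ | ¬x ≠ a} = {a} := by ext x; simp
            rw [this]; exact Real.volume_singleton)] with s hs hsα hs0 hsa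
        have hsIoo : s ∈ Ioo (0:ℝ) a :=
          ⟨lt_of_le_of_ne hs.1 (Ne.symm hs0), lt_of_le_of_ne hs.2 hsa⟩
        have := hclaim s hsIoo hsα
        simp only [Pi.zero_apply]
        linarith
      have hexp : (∫ s in (0:ℝ)..a, (h s ^ q - f s ^ q - C * (h s ^ p - f s ^ p)))
          = (∫ s in (0:ℝ)..a, h s ^ q) - B - C * ((∫ s in (0:ℝ)..a, h s ^ p) - A) := by
        rw [intervalIntegral.integral_sub ((hhint q hq).sub (hfin q hq))
          (((hhint p hp).sub (hfin p hp)).const_mul C),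
          intervalIntegral.integral_sub (hhint q hq) (hfin q hq),
          intervalIntegral.integral_const_mul,
          intervalIntegral.integral_sub (hhint p hp) (hfin p hp),
          ← hA_def, ← hB_def]
      rw [hexp, hhpA, sub_self, mul_zero, sub_zero, hhq] at hnnD
      linarith
  -- final assembly
  rw [ge_iff_le, hsym p hp, hsym q hq, ← hA_def, ← hB_def]
  have hLHS : (1 + p) / (2 * a) * (2 * A) = (1 + p) / a * A := by
    field_simp [ha.ne']
  have hRHS : (1 + q) / (2 * a) * (2 * B) = (1 + q) / a * B := by
    field_simp [ha.ne']
  rw [hLHS, hRHS, ← hc_def]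
  have h1 : (1 + q) / a * B ≤ c ^ q := by
    have h2 : (1 + q) / a * B ≤ (1 + q) / a * (c ^ q * a / (q + 1)) :=
      mul_le_mul_of_nonneg_left hkey (div_nonneg (by linarith) ha.le)
    have h3 : (1 + q) / a * (c ^ q * a / (q + 1)) = c ^ q := by
      field_simp [ha.ne', (show q + 1 ≠ 0 by positivity)]
      ring
    linarith
  calc ((1 + q) / a * B) ^ (1 / q) ≤ (c ^ q) ^ (1 / q) :=
        Real.rpow_le_rpow (mul_nonneg (div_nonneg (by linarith) ha.le) hB0) h1
          (by positivity)
    _ = c := by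
        rw [← Real.rpow_mul hc0, mul_one_div_cancel hq.ne', Real.rpow_one]
end
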